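/- arXiv:2310.16633 — 3 statements merged into one kernel-verified Lean document; each statement's English description precedes it below -/
import Mathlib

section
/- For two continuous random variables X and Y with joint density f, marginal densities f_X and f_Y, and copula density c (so that f(x,y) = f_X(x) f_Y(y) c(F_X(x), F_Y(y))), the mutual information I(X;Y) equals the negative copula entropy: I(X;Y) = -H_c(X,Y), where H_c(X,Y) = -∫_{[0,1]^2} c(u,v) log c(u,v) du dv. -/
open MeasureTheory Set Filter Topology ENNReal NNReal

section aux

lemma pit_aux (g F : ℝ → ℝ) (hg0 : ∀ x, 0 ≤ g x)
    (hg_int : Integrable g) (hg1 : ∫ x, g x = 1)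
    (hF : ∀ x, F x = ∫ t in Iic x, g t) (hmono : StrictMono F) (hcont : Continuous F) :
    Measure.map F (volume.withDensity (fun x => ENNReal.ofReal (g x))) =
      volume.restrict (Ioo (0:ℝ) 1) := by
  set ν := volume.withDensity (fun x => ENNReal.ofReal (g x)) with hν
  have hν_Iic : ∀ x, ν (Iic x) = ENNReal.ofReal (F x) := by
    intro x
    rw [hν, withDensity_apply _ measurableSet_Iic,
      ← ofReal_integral_eq_lintegral_ofReal hg_int.integrableOn
        (Filter.Eventually.of_forall fun t => hg0 t), hF]
  have hν_univ : ν univ = 1 := by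
    rw [hν, withDensity_apply _ MeasurableSet.univ, Measure.restrict_univ,
      ← ofReal_integral_eq_lintegral_ofReal hg_int (Filter.Eventually.of_forall hg0), hg1,
      ENNReal.ofReal_one]
  haveI : IsFiniteMeasure ν := ⟨by rw [hν_univ]; exact ENNReal.one_lt_top⟩
  have hF_nonneg : ∀ x, 0 ≤ F x := fun x => by
    rw [hF]; exact setIntegral_nonneg measurableSet_Iic fun t _ => hg0 t
  have hF_pos : ∀ x, 0 < F x := fun x =>
    lt_of_le_of_lt (hF_nonneg (x - 1)) (hmono (by linarith))
  have hF_lt : ∀ x, F x < 1 := by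
    intro x
    have h1 : F (x + 1) ≤ 1 := by
      rw [hF, ← hg1]
      exact setIntegral_le_integral hg_int (Filter.Eventually.of_forall hg0)
    exact lt_of_lt_of_le (hmono (lt_add_one x)) h1
  have hsurj : ∀ t ∈ Ioo (0:ℝ) 1, ∃ x, F x = t := by
    intro t ht
    have h1 : ∀ᶠ x : ℝ in atTop, ENNReal.ofReal t < ν (Iic x) :=
      (tendsto_measure_Iic_atTop ν).eventually
        (eventually_gt_nhds (by rw [hν_univ]; exact ENNReal.ofReal_lt_one.2 ht.2))
    obtain ⟨b, hb⟩ := h1.exists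
    have hb' : t < F b := by
      rw [hν_Iic] at hb
      exact (ENNReal.ofReal_lt_ofReal_iff_of_nonneg ht.1.le).1 hb
    have h2 : Tendsto (fun n : ℕ => ν (Iic (-(n:ℝ)))) atTop
        (𝓝 (ν (⋂ n : ℕ, Iic (-(n:ℝ))))) :=
      tendsto_measure_iInter_atTop (fun n => measurableSet_Iic.nullMeasurableSet)
        (fun m n hmn => Iic_subset_Iic.2 (neg_le_neg (by exact_mod_cast hmn)))
        ⟨0, measure_ne_top ν _⟩
    have hempty : (⋂ n : ℕ, Iic (-(n:ℝ))) = ∅ := by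
      ext x
      simp only [mem_iInter, mem_Iic, mem_empty_iff_false, iff_false, not_forall, not_le]
      obtain ⟨n, hn⟩ := exists_nat_gt (-x)
      exact ⟨n, by linarith⟩
    rw [hempty, measure_empty] at h2
    have h3 : ∀ᶠ n : ℕ in atTop, ν (Iic (-(n:ℝ))) < ENNReal.ofReal t :=
      h2.eventually (eventually_lt_nhds (ENNReal.ofReal_pos.2 ht.1))
    obtain ⟨n, hn⟩ := h3.exists
    have ha' : F (-(n:ℝ)) < t := by
      rw [hν_Iic] at hn
      exact (ENNReal.ofReal_lt_ofReal_iff ht.1).1 hn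
    have hab : (-(n:ℝ)) ≤ b := (hmono.lt_iff_lt.1 (ha'.trans hb')).le
    obtain ⟨x, -, hx⟩ := intermediate_value_Icc hab hcont.continuousOn ⟨ha'.le, hb'.le⟩
    exact ⟨x, hx⟩
  refine Measure.ext_of_Iic (Measure.map F ν) _ (fun b => ?_)
  rw [Measure.map_apply hcont.measurable measurableSet_Iic,
    Measure.restrict_apply measurableSet_Iic]
  by_cases hb0 : b ≤ 0
  · have h1 : F ⁻¹' Iic b = ∅ := by
      ext x
      simp only [mem_preimage, mem_Iic, mem_empty_iff_false, iff_false, not_le]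
      exact lt_of_le_of_lt hb0 (hF_pos x)
    have h2 : Iic b ∩ Ioo (0:ℝ) 1 = ∅ := by
      ext x
      simp only [mem_inter_iff, mem_Iic, mem_Ioo, mem_empty_iff_false, iff_false, not_and]
      intro hx h0
      linarith
    rw [h1, h2, measure_empty, measure_empty]
  · by_cases hb1 : 1 ≤ b
    · have h1 : F ⁻¹' Iic b = univ := by
        ext x
        simp only [mem_preimage, mem_Iic, mem_univ, iff_true]
        exact le_of_lt (lt_of_lt_of_le (hF_lt x) hb1)
      have h2 : Iic b ∩ Ioo (0:ℝ) 1 = Ioo 0 1 := by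
        rw [inter_eq_right]
        exact fun x hx => le_of_lt (lt_of_lt_of_le hx.2 hb1)
      rw [h1, h2, hν_univ, Real.volume_Ioo]
      norm_num
    · push_neg at hb0 hb1
      obtain ⟨x0, hx0⟩ := hsurj b ⟨hb0, hb1⟩
      have h1 : F ⁻¹' Iic b = Iic x0 := by
        ext x
        simp only [mem_preimage, mem_Iic, ← hx0, hmono.le_iff_le]
      have h2 : Iic b ∩ Ioo (0:ℝ) 1 = Ioc 0 b := by
        ext x
        simp only [mem_inter_iff, mem_Iic, mem_Ioo, mem_Ioc]
        constructor
        · rintro ⟨h1, h2, h3⟩; exact ⟨h2, h1⟩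
        · rintro ⟨h1, h2⟩; exact ⟨h2, h1, lt_of_le_of_lt h2 hb1⟩
      rw [h1, h2, hν_Iic, hx0, Real.volume_Ioc]
      norm_num

lemma withDensity_prod_aux (gX gY : ℝ → ℝ≥0∞) (hX : Measurable gX) (hY : Measurable gY)
    (hfinX : ∫⁻ x, gX x ≠ ⊤) (hfinY : ∫⁻ y, gY y ≠ ⊤) :
    (volume.withDensity gX).prod (volume.withDensity gY) =
      (volume : Measure (ℝ × ℝ)).withDensity (fun p => gX p.1 * gY p.2) := by
  haveI : IsFiniteMeasure (volume.withDensity gX) := isFiniteMeasure_withDensity hfinX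
  haveI : IsFiniteMeasure (volume.withDensity gY) := isFiniteMeasure_withDensity hfinY
  refine Measure.prod_eq (fun s t hs ht => ?_)
  rw [withDensity_apply _ (hs.prod ht), Measure.volume_eq_prod,
    ← Measure.prod_restrict, lintegral_prod_mul hX.aemeasurable hY.aemeasurable,
    withDensity_apply _ hs, withDensity_apply _ ht]

end aux

/-- Mutual information equals negative copula entropy (Ma–Sun theorem, bivariate). -/
theorem mutualInfo_eq_neg_copulaEntropy
    (f : ℝ × ℝ → ℝ) (fX fY FX FY : ℝ → ℝ) (c : ℝ × ℝ → ℝ)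
    (hf_meas : Measurable f) (hc_meas : Measurable c)
    (hf_nonneg : ∀ p, 0 ≤ f p) (hfX_nonneg : ∀ x, 0 ≤ fX x) (hfY_nonneg : ∀ y, 0 ≤ fY y)
    (hf_int : Integrable f) (hf_one : ∫ p, f p = 1)
    (hmargX : ∀ x, fX x = ∫ y, f (x, y))
    (hmargY : ∀ y, fY y = ∫ x, f (x, y))
    (hFX : ∀ x, FX x = ∫ t in Iic x, fX t)
    (hFY : ∀ y, FY y = ∫ t in Iic y, fY t)
    (hFX_mono : StrictMono FX) (hFY_mono : StrictMono FY)
    (hFX_cont : Continuous FX) (hFY_cont : Continuous FY)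
    (hSklar : ∀ x y, f (x, y) = fX x * fY y * c (FX x, FY y))
    (hMI_int : Integrable (fun p => f p * Real.log (f p / (fX p.1 * fY p.2))))
    (hc_int : IntegrableOn (fun p => c p * Real.log (c p)) (Icc (0:ℝ) 1 ×ˢ Icc (0:ℝ) 1)) :
    (∫ p, f p * Real.log (f p / (fX p.1 * fY p.2))) =
      -(-∫ p in (Icc (0:ℝ) 1 ×ˢ Icc (0:ℝ) 1), c p * Real.log (c p)) := by
  rw [neg_neg]
  -- basic facts about the marginals
  have heX : fX = fun x => ∫ y, f (x, y) := funext hmargX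
  have heY : fY = fun y => ∫ x, f (x, y) := funext hmargY
  have hf_int' : Integrable f ((volume : Measure ℝ).prod volume) := by
    rwa [← Measure.volume_eq_prod]
  have hfX_meas : Measurable fX := by
    rw [heX]; exact hf_meas.stronglyMeasurable.integral_prod_right'.measurable
  have hfY_meas : Measurable fY := by
    rw [heY]; exact hf_meas.stronglyMeasurable.integral_prod_left'.measurable
  have hfX_int : Integrable fX := by rw [heX]; exact hf_int'.integral_prod_left
  have hfY_int : Integrable fY := by rw [heY]; exact hf_int'.integral_prod_right
  have huncurry : Integrable (Function.uncurry fun x y => f (x, y))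
      ((volume : Measure ℝ).prod volume) := by
    exact hf_int'
  have hfX_one : ∫ x, fX x = 1 := by
    rw [heX]
    calc (∫ x, ∫ y, f (x, y)) = ∫ p, f (p.1, p.2) ∂((volume : Measure ℝ).prod volume) :=
          integral_integral huncurry
      _ = 1 := by rw [← Measure.volume_eq_prod] at *; simpa using hf_one
  have hfY_one : ∫ y, fY y = 1 := by
    rw [heY]
    calc (∫ y, ∫ x, f (x, y)) = ∫ x, ∫ y, f (x, y) := (integral_integral_swap huncurry).symm
      _ = 1 := by rw [← heX, hfX_one]
  -- the pushforward measures
  set νX := volume.withDensity (fun x => ENNReal.ofReal (fX x)) with hνX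
  set νY := volume.withDensity (fun y => ENNReal.ofReal (fY y)) with hνY
  have hlintX : ∫⁻ x, ENNReal.ofReal (fX x) = 1 := by
    rw [← ofReal_integral_eq_lintegral_ofReal hfX_int (Filter.Eventually.of_forall hfX_nonneg),
      hfX_one, ENNReal.ofReal_one]
  have hlintY : ∫⁻ y, ENNReal.ofReal (fY y) = 1 := by
    rw [← ofReal_integral_eq_lintegral_ofReal hfY_int (Filter.Eventually.of_forall hfY_nonneg),
      hfY_one, ENNReal.ofReal_one]
  haveI : IsFiniteMeasure νX := isFiniteMeasure_withDensity (by rw [hlintX]; exact one_ne_top)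
  haveI : IsFiniteMeasure νY := isFiniteMeasure_withDensity (by rw [hlintY]; exact one_ne_top)
  have hpitX : Measure.map FX νX = volume.restrict (Ioo (0:ℝ) 1) :=
    pit_aux fX FX hfX_nonneg hfX_int hfX_one hFX hFX_mono hFX_cont
  have hpitY : Measure.map FY νY = volume.restrict (Ioo (0:ℝ) 1) :=
    pit_aux fY FY hfY_nonneg hfY_int hfY_one hFY hFY_mono hFY_cont
  -- restricting to the open square is the same as restricting to the closed square
  have hae : (Icc (0:ℝ) 1 ×ˢ Icc (0:ℝ) 1 : Set (ℝ × ℝ)) =ᵐ[volume]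
      (Ioo (0:ℝ) 1 ×ˢ Ioo (0:ℝ) 1 : Set (ℝ × ℝ)) := by
    rw [ae_eq_set]
    constructor
    · have hsub : (Icc (0:ℝ) 1 ×ˢ Icc (0:ℝ) 1 : Set (ℝ × ℝ)) \ (Ioo 0 1 ×ˢ Ioo 0 1) ⊆
          (({0, 1} : Set ℝ) ×ˢ (univ : Set ℝ)) ∪ ((univ : Set ℝ) ×ˢ ({0, 1} : Set ℝ)) := by
        rintro ⟨x, y⟩ ⟨⟨hx, hy⟩, hn⟩
        simp only [mem_prod, mem_Ioo, not_and] at hn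
        by_cases hx' : x ∈ Ioo (0:ℝ) 1
        · right
          have hy' : y ∉ Ioo (0:ℝ) 1 := by
            intro hy'; exact absurd hy' (by simpa [hx'.1, hx'.2] using hn)
          have : y = 0 ∨ y = 1 := by
            rcases hy with ⟨h1, h2⟩
            rcases eq_or_lt_of_le h1 with h | h
            · exact Or.inl h.symm
            · rcases eq_or_lt_of_le h2 with h' | h'
              · exact Or.inr h'
              · exact absurd ⟨h, h'⟩ hy'
          exact ⟨mem_univ _, this⟩
        · left
          have : x = 0 ∨ x = 1 := by
            rcases hx with ⟨h1, h2⟩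
            rcases eq_or_lt_of_le h1 with h | h
            · exact Or.inl h.symm
            · rcases eq_or_lt_of_le h2 with h' | h'
              · exact Or.inr h'
              · exact absurd ⟨h, h'⟩ hx'
          exact ⟨this, mem_univ _⟩
      refine measure_mono_null hsub (measure_union_null ?_ ?_)
      · rw [Measure.volume_eq_prod, Measure.prod_prod]
        have : volume ({0, 1} : Set ℝ) = 0 := (Set.toFinite _).measure_zero volume
        rw [this, zero_mul]
      · rw [Measure.volume_eq_prod, Measure.prod_prod]
        have : volume ({0, 1} : Set ℝ) = 0 := (Set.toFinite _).measure_zero volume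
        rw [this, mul_zero]
    · have : (Ioo (0:ℝ) 1 ×ˢ Ioo (0:ℝ) 1 : Set (ℝ × ℝ)) \ (Icc 0 1 ×ˢ Icc 0 1) = ∅ :=
        diff_eq_empty.2 (prod_mono Ioo_subset_Icc_self Ioo_subset_Icc_self)
      rw [this, measure_empty]
  -- the measure identity
  have hmeasid : (volume : Measure (ℝ × ℝ)).restrict (Ioo (0:ℝ) 1 ×ˢ Ioo (0:ℝ) 1) =
      Measure.map (Prod.map FX FY) (νX.prod νY) := by
    have h := Measure.map_prod_map νX νY hFX_cont.measurable hFY_cont.measurable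
    rw [hpitX, hpitY, Measure.prod_restrict] at h
    rw [Measure.volume_eq_prod]
    exact h
  have hprodd : νX.prod νY = (volume : Measure (ℝ × ℝ)).withDensity
      (fun p => ENNReal.ofReal (fX p.1) * ENNReal.ofReal (fY p.2)) :=
    withDensity_prod_aux _ _ hfX_meas.ennreal_ofReal hfY_meas.ennreal_ofReal
      (by rw [hlintX]; exact one_ne_top) (by rw [hlintY]; exact one_ne_top)
  -- measurability of the entropy integrand
  have hh_meas : Measurable (fun p : ℝ × ℝ => c p * Real.log (c p)) :=
    hc_meas.mul (Real.measurable_log.comp hc_meas)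
  -- the chain of equalities
  have hdens : (fun p : ℝ × ℝ => ENNReal.ofReal (fX p.1) * ENNReal.ofReal (fY p.2)) =
      (fun p : ℝ × ℝ => ((((fX p.1).toNNReal * (fY p.2).toNNReal) : ℝ≥0) : ℝ≥0∞)) := by
    funext p
    rw [ENNReal.coe_mul]
    simp [ENNReal.ofReal]
  have hw_meas : Measurable (fun p : ℝ × ℝ => (fX p.1).toNNReal * (fY p.2).toNNReal) :=
    ((hfX_meas.comp measurable_fst).real_toNNReal).mul
      ((hfY_meas.comp measurable_snd).real_toNNReal)
  calc (∫ p, f p * Real.log (f p / (fX p.1 * fY p.2)))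
      = ∫ p : ℝ × ℝ, ((fX p.1).toNNReal * (fY p.2).toNNReal : ℝ≥0) •
          ((fun q : ℝ × ℝ => c q * Real.log (c q)) ∘ (Prod.map FX FY)) p := by
        refine integral_congr_ae (Filter.Eventually.of_forall (fun p => ?_))
        obtain ⟨x, y⟩ := p
        simp only [Function.comp_apply, Prod.map_apply, NNReal.smul_def, NNReal.coe_mul,
          Real.coe_toNNReal _ (hfX_nonneg x), Real.coe_toNNReal _ (hfY_nonneg y)]
        by_cases hxy : fX x * fY y = 0
        · rw [hSklar x y, hxy]
          simp
        · have hdiv : f (x, y) / (fX x * fY y) = c (FX x, FY y) := by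
            rw [hSklar x y]
            exact mul_div_cancel_left₀ _ hxy
          rw [hdiv, hSklar x y, smul_eq_mul]
          ring
    _ = ∫ p, ((fun q : ℝ × ℝ => c q * Real.log (c q)) ∘ (Prod.map FX FY)) p
          ∂((volume : Measure (ℝ × ℝ)).withDensity
            (fun p => ENNReal.ofReal (fX p.1) * ENNReal.ofReal (fY p.2))) := by
        rw [hdens, integral_withDensity_eq_integral_smul hw_meas]
    _ = ∫ p, ((fun q : ℝ × ℝ => c q * Real.log (c q)) ∘ (Prod.map FX FY)) p ∂(νX.prod νY) := by
        rw [hprodd]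
    _ = ∫ p, c p * Real.log (c p) ∂(Measure.map (Prod.map FX FY) (νX.prod νY)) := by
        rw [integral_map (hFX_cont.measurable.prodMap hFY_cont.measurable).aemeasurable
          hh_meas.aestronglyMeasurable]
        simp only [Function.comp_apply]
    _ = ∫ p in (Ioo (0:ℝ) 1 ×ˢ Ioo (0:ℝ) 1), c p * Real.log (c p) := by rw [← hmeasid]
    _ = ∫ p in (Icc (0:ℝ) 1 ×ˢ Icc (0:ℝ) 1), c p * Real.log (c p) :=
        (setIntegral_congr_set hae).symm
end

section
/- For a continuous random vector X = (X_1,...,X_n) with joint density, the joint differential entropy decomposes as H(X) = Σ_i H(X_i) + H_c(X), where H_c(X) is the copula entropy of X. -/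
open MeasureTheory Set
open scoped NNReal ENNReal

noncomputable section EntropyAux

namespace EntropyAux

variable {n : ℕ}

instance instUniqueNotNe (i : Fin n) : Unique {j : Fin n // ¬ j ≠ i} :=
  ⟨⟨⟨i, not_not_intro rfl⟩⟩, fun ⟨j, h⟩ => Subtype.ext (not_not.mp h)⟩

/-- Splitting off the `i`-th coordinate. -/
def EE (i : Fin n) : ((Fin n) → ℝ) ≃ᵐ ℝ × ({j : Fin n // j ≠ i} → ℝ) :=
  ((MeasurableEquiv.piEquivPiSubtypeProd (fun _ : Fin n => ℝ) (fun j => j ≠ i)).trans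
    ((MeasurableEquiv.refl _).prodCongr
      (MeasurableEquiv.piUnique (fun _ : {j : Fin n // ¬ j ≠ i} => ℝ)))).trans
    MeasurableEquiv.prodComm

theorem mpEE (i : Fin n) : MeasurePreserving (EE i) volume volume := by
  have h1 := volume_preserving_piEquivPiSubtypeProd (fun _ : Fin n => ℝ) (fun j => j ≠ i)
  have h2 : MeasurePreserving
      (Prod.map (id : ({j : Fin n // j ≠ i} → ℝ) → _)
        (MeasurableEquiv.piUnique (fun _ : {j : Fin n // ¬ j ≠ i} => ℝ)))
      volume volume :=
    (MeasurePreserving.id _).prod (measurePreserving_piUnique _)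
  have h3 : MeasurePreserving (Prod.swap : (({j : Fin n // j ≠ i} → ℝ) × ℝ) → _)
      volume volume := Measure.measurePreserving_swap
  exact (h3.comp (h2.comp h1) : _)

theorem EE_symm_apply (i : Fin n) (t : ℝ) (y : {j : Fin n // j ≠ i} → ℝ) :
    (EE i).symm (t, y) = fun j => if h : j = i then t else y ⟨j, h⟩ := by
  funext j
  by_cases h : j = i <;>
  simp [EE, MeasurableEquiv.piEquivPiSubtypeProd, MeasurableEquiv.piUnique,
    MeasurableEquiv.prodCongr, MeasurableEquiv.refl, MeasurableEquiv.prodComm,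
    MeasurableEquiv.trans, Equiv.piEquivPiSubtypeProd, h, uniqueElim]

theorem EE_symm_apply_self (i : Fin n) (p : ℝ × ({j : Fin n // j ≠ i} → ℝ)) :
    ((EE i).symm p) i = p.1 := by
  obtain ⟨t, y⟩ := p
  rw [EE_symm_apply]
  simp

/-- The pushforward of an absolutely continuous measure by its own CDF is the
Lebesgue measure on `(0, 1]`. -/
theorem map_cdf_eq (fi : ℝ → ℝ) (h0 : ∀ x, 0 ≤ fi x) (hint : Integrable fi)
    (hone : ∫ t, fi t = 1) (F : ℝ → ℝ) (hF : ∀ x, F x = ∫ t in Iic x, fi t)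
    (hsm : StrictMono F) (hcont : Continuous F) :
    (volume.withDensity (fun t => ENNReal.ofReal (fi t))).map F
      = volume.restrict (Ioc (0:ℝ) 1) := by
  set ν := volume.withDensity (fun t => ENNReal.ofReal (fi t)) with hν
  have hae : 0 ≤ᶠ[ae volume] fi := Filter.Eventually.of_forall h0
  have hνs : ∀ s : Set ℝ, MeasurableSet s → ν s = ENNReal.ofReal (∫ t in s, fi t) := by
    intro s hs
    rw [hν, withDensity_apply _ hs,
      ← ofReal_integral_eq_lintegral_ofReal hint.integrableOn (ae_restrict_of_ae hae)]
  have hνIic : ∀ x, ν (Iic x) = ENNReal.ofReal (F x) := fun x => by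
    rw [hνs _ measurableSet_Iic, hF]
  have hνuniv : ν univ = 1 := by
    rw [hνs _ MeasurableSet.univ]
    simp [hone]
  have hFnn : ∀ x, 0 ≤ F x := fun x => by
    rw [hF]; exact setIntegral_nonneg measurableSet_Iic fun t _ => h0 t
  have hFpos : ∀ x, 0 < F x := fun x =>
    lt_of_le_of_lt (hFnn (x - 1)) (hsm (by linarith))
  have hFle : ∀ x, F x ≤ 1 := fun x => by
    rw [hF, ← hone]; exact setIntegral_le_integral hint hae
  have hFlt1 : ∀ x, F x < 1 := fun x => lt_of_lt_of_le (hsm (lt_add_one x)) (hFle (x + 1))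
  haveI : IsFiniteMeasure ν := ⟨by rw [hνuniv]; exact ENNReal.one_lt_top⟩
  haveI : IsFiniteMeasure (ν.map F) := by
    constructor
    rw [Measure.map_apply hcont.measurable MeasurableSet.univ, preimage_univ, hνuniv]
    exact ENNReal.one_lt_top
  refine Measure.ext_of_Iic _ _ fun u => ?_
  rw [Measure.map_apply hcont.measurable measurableSet_Iic,
    Measure.restrict_apply measurableSet_Iic]
  by_cases hu0 : u ≤ 0
  · have h1 : F ⁻¹' Iic u = ∅ := by
      ext x; simp only [mem_preimage, mem_Iic, mem_empty_iff_false, iff_false, not_le]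
      exact lt_of_le_of_lt hu0 (hFpos x)
    have h2 : Iic u ∩ Ioc (0:ℝ) 1 = ∅ := by
      ext x; simp only [mem_inter_iff, mem_Iic, mem_Ioc, mem_empty_iff_false, iff_false]
      rintro ⟨hx, hx0, -⟩; linarith
    rw [h1, h2]; simp
  push_neg at hu0
  by_cases hu1 : 1 ≤ u
  · have h1 : F ⁻¹' Iic u = univ := by
      ext x; simp only [mem_preimage, mem_Iic, mem_univ, iff_true]
      exact le_trans (hFle x) hu1
    have h2 : Iic u ∩ Ioc (0:ℝ) 1 = Ioc 0 1 := by
      rw [inter_eq_right]; exact fun x hx => le_trans hx.2 hu1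
    rw [h1, h2, hνuniv, Real.volume_Ioc]
    norm_num
  push_neg at hu1
  obtain ⟨b, hb⟩ : ∃ b, u < F b := by
    have ht := tendsto_measure_Iic_atTop ν
    rw [hνuniv] at ht
    have : ∀ᶠ x in Filter.atTop, ENNReal.ofReal u < ν (Iic x) :=
      ht.eventually_const_lt (ENNReal.ofReal_lt_one.mpr hu1)
    obtain ⟨b, hb⟩ := this.exists
    refine ⟨b, ?_⟩
    rw [hνIic b] at hb
    exact (ENNReal.ofReal_lt_ofReal_iff_of_nonneg hu0.le).mp hb
  obtain ⟨a, ha⟩ : ∃ a, F a < u := by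
    have hm : ∀ m : ℕ, NullMeasurableSet (Iic (-(m:ℝ))) ν :=
      fun m => measurableSet_Iic.nullMeasurableSet
    have hanti : Antitone fun m : ℕ => Iic (-(m:ℝ)) := fun p q hpq =>
      Iic_subset_Iic.mpr (by exact_mod_cast neg_le_neg (by exact_mod_cast hpq))
    have hint2 : ⋂ m : ℕ, Iic (-(m:ℝ)) = ∅ := by
      ext x
      simp only [mem_iInter, mem_Iic, mem_empty_iff_false, iff_false, not_forall, not_le]
      obtain ⟨m, hm⟩ := exists_nat_gt (-x)
      exact ⟨m, by linarith⟩
    have ht := tendsto_measure_iInter_atTop hm hanti ⟨0, measure_ne_top _ _⟩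
    rw [hint2, measure_empty] at ht
    have : ∀ᶠ m : ℕ in Filter.atTop, ν (Iic (-(m:ℝ))) < ENNReal.ofReal u :=
      ht.eventually_lt_const (by simpa using ENNReal.ofReal_pos.mpr hu0)
    obtain ⟨m, hm'⟩ := this.exists
    refine ⟨-(m:ℝ), ?_⟩
    rw [hνIic] at hm'
    exact (ENNReal.ofReal_lt_ofReal_iff hu0).mp hm'
  have hab : a < b := hsm.lt_iff_lt.mp (ha.trans hb)
  obtain ⟨c, -, hc⟩ : ∃ c ∈ Icc a b, F c = u :=
    intermediate_value_Icc hab.le hcont.continuousOn ⟨ha.le, hb.le⟩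
  have h1 : F ⁻¹' Iic u = Iic c := by
    ext x
    simp only [mem_preimage, mem_Iic, ← hc]
    exact hsm.le_iff_le
  have h2 : Iic u ∩ Ioc (0:ℝ) 1 = Ioc 0 u := by
    ext x
    simp only [mem_inter_iff, mem_Iic, mem_Ioc]
    constructor
    · rintro ⟨h, h0', -⟩; exact ⟨h0', h⟩
    · rintro ⟨h0', h⟩; exact ⟨h, h0', h.trans hu1.le⟩
  rw [h1, h2, hνIic, hc, Real.volume_Ioc]
  norm_num

theorem lintegral_fin_pi_prod : ∀ {n : ℕ} (μ : Fin n → Measure ℝ) [∀ i, SigmaFinite (μ i)]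
    (f : Fin n → ℝ → ENNReal), (∀ i, Measurable (f i)) →
    ∫⁻ x : Fin n → ℝ, ∏ i, f i (x i) ∂Measure.pi μ = ∏ i, ∫⁻ t, f i t ∂μ i := by
  intro n
  induction n with
  | zero => intro μ _ f hf; simp [lintegral_const, Measure.pi_univ]
  | succ n ih =>
    intro μ _ f hf
    have mp := (measurePreserving_piFinSuccAbove (fun i => μ i) 0).symm
    rw [← mp.lintegral_comp_emb (MeasurableEquiv.measurableEmbedding _)]
    simp_rw [MeasurableEquiv.piFinSuccAbove_symm_apply, Fin.insertNthEquiv,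
      Equiv.coe_fn_mk, Fin.insertNth_zero, Fin.prod_univ_succ, Fin.cons_zero, Fin.cons_succ,
      Fin.zero_succAbove, cast_eq]
    have hmeas : Measurable fun y : Fin n → ℝ => ∏ i, f i.succ (y i) :=
      Finset.measurable_prod _ fun i _ => (hf i.succ).comp (measurable_pi_apply i)
    rw [lintegral_prod_mul (hf 0).aemeasurable hmeas.aemeasurable]
    rw [ih (fun i => μ i.succ) (fun i => f i.succ) (fun i => hf i.succ)]

theorem pi_withDensity' {n : ℕ} (μ : Fin n → Measure ℝ) [∀ i, SigmaFinite (μ i)]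
    (g : Fin n → ℝ → ENNReal) (hg : ∀ i, Measurable (g i))
    [∀ i, SigmaFinite ((μ i).withDensity (g i))] :
    Measure.pi (fun i => (μ i).withDensity (g i))
      = (Measure.pi μ).withDensity (fun x => ∏ i, g i (x i)) := by
  refine Measure.pi_eq fun s hs => ?_
  rw [withDensity_apply _ (MeasurableSet.univ_pi hs),
    ← lintegral_indicator (MeasurableSet.univ_pi hs)]
  have key : ∀ x : Fin n → ℝ, (univ.pi s).indicator (fun x => ∏ i, g i (x i)) x
      = ∏ i, (s i).indicator (g i) (x i) := by
    intro x
    by_cases hx : x ∈ univ.pi s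
    · rw [indicator_of_mem hx]
      exact Finset.prod_congr rfl fun i _ =>
        (indicator_of_mem (hx i (mem_univ i)) _).symm
    · rw [indicator_of_notMem hx]
      rw [mem_univ_pi] at hx
      push_neg at hx
      obtain ⟨i, hi⟩ := hx
      exact (Finset.prod_eq_zero (Finset.mem_univ i) (indicator_of_notMem hi _)).symm
  simp_rw [key]
  rw [lintegral_fin_pi_prod μ _ (fun i => (hg i).indicator (hs i))]
  exact Finset.prod_congr rfl fun i _ => by
    rw [lintegral_indicator (hs i), withDensity_apply _ (hs i)]

theorem pi_map' {n : ℕ} (ν : Fin n → Measure ℝ) [∀ i, SigmaFinite (ν i)]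
    (F : Fin n → ℝ → ℝ) (hF : ∀ i, Measurable (F i))
    [∀ i, SigmaFinite ((ν i).map (F i))] :
    (Measure.pi ν).map (fun x i => F i (x i)) = Measure.pi (fun i => (ν i).map (F i)) := by
  refine (Measure.pi_eq fun s hs => ?_).symm
  have hΦ : Measurable (fun (x : Fin n → ℝ) i => F i (x i)) :=
    measurable_pi_lambda _ fun i => (hF i).comp (measurable_pi_apply i)
  rw [Measure.map_apply hΦ (MeasurableSet.univ_pi hs)]
  have hpre : (fun (x : Fin n → ℝ) i => F i (x i)) ⁻¹' (univ.pi s)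
      = univ.pi (fun i => F i ⁻¹' s i) := by ext x; simp [Set.mem_pi]
  rw [hpre, Measure.pi_pi]
  exact Finset.prod_congr rfl fun i _ => (Measure.map_apply (hF i) (hs i)).symm

theorem pi_restrict' {n : ℕ} (s : Fin n → Set ℝ) (hs : ∀ i, MeasurableSet (s i)) :
    Measure.pi (fun i => (volume : Measure ℝ).restrict (s i))
      = (volume : Measure (Fin n → ℝ)).restrict (univ.pi s) := by
  refine Measure.pi_eq fun t ht => ?_
  rw [Measure.restrict_apply (MeasurableSet.univ_pi ht), ← pi_inter_distrib, volume_pi,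
    Measure.pi_pi]
  exact Finset.prod_congr rfl fun i _ => (Measure.restrict_apply (ht i)).symm

end EntropyAux

end EntropyAux

open EntropyAux

/-- Entropy decomposition: joint differential entropy equals the sum of the
marginal entropies plus the copula entropy. -/
theorem entropy_decomposition
    {n : ℕ} (f : (Fin n → ℝ) → ℝ) (fi : Fin n → ℝ → ℝ) (Fi : Fin n → ℝ → ℝ)
    (c : (Fin n → ℝ) → ℝ)
    (hf_meas : Measurable f) (hc_meas : Measurable c)
    (hf_nonneg : ∀ x, 0 ≤ f x) (hfi_nonneg : ∀ i x, 0 ≤ fi i x)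
    (hf_int : Integrable f) (hf_one : ∫ x, f x = 1)
    (hFi : ∀ i x, Fi i x = ∫ t in Iic x, fi i t)
    (hFi_mono : ∀ i, StrictMono (Fi i)) (hFi_cont : ∀ i, Continuous (Fi i))
    (hmarg : ∀ i x, fi i x = ∫ y : {j : Fin n // j ≠ i} → ℝ,
      f (fun j => if h : j = i then x else y ⟨j, h⟩))
    (hSklar : ∀ x, f x = (∏ i, fi i (x i)) * c (fun i => Fi i (x i)))
    (hH_int : Integrable (fun x => f x * Real.log (f x)))
    (hHi_int : ∀ i, Integrable (fun x => fi i x * Real.log (fi i x)))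
    (hc_int : IntegrableOn (fun u => c u * Real.log (c u)) (univ.pi fun _ => Icc (0:ℝ) 1)) :
    (-∫ x, f x * Real.log (f x)) =
      (∑ i, -∫ x, fi i x * Real.log (fi i x)) +
        (-∫ u in (univ.pi fun _ => Icc (0:ℝ) 1), c u * Real.log (c u)) := by
  classical
  -- notation
  set Φ : (Fin n → ℝ) → (Fin n → ℝ) := fun x i => Fi i (x i) with hΦdef
  have hΦ_meas : Measurable Φ :=
    measurable_pi_lambda _ fun i => (hFi_cont i).measurable.comp (measurable_pi_apply i)
  -- the slice function
  have hG : ∀ i : Fin n, ∀ p : ℝ × ({j : Fin n // j ≠ i} → ℝ),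
      f ((EE i).symm p) = f (fun j => if h : j = i then p.1 else p.2 ⟨j, h⟩) := by
    intro i p; rw [EE_symm_apply i p.1 p.2]
  have hG_int : ∀ i : Fin n, Integrable (fun p : ℝ × ({j : Fin n // j ≠ i} → ℝ) =>
      f ((EE i).symm p)) := fun i =>
    (((mpEE i).symm (EE i)).integrable_comp_emb
      (MeasurableEquiv.measurableEmbedding _)).mpr hf_int
  have hmarg' : ∀ (i : Fin n) (x : ℝ), fi i x = ∫ y, f ((EE i).symm (x, y)) := by
    intro i x
    rw [hmarg i x]
    refine integral_congr_ae (Filter.Eventually.of_forall fun y => ?_)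
    exact (hG i (x, y)).symm
  -- measurability and integrability of the marginals
  have hfi_meas : ∀ i, Measurable (fi i) := by
    intro i
    have : fi i = fun x => ∫ y, f ((EE i).symm (x, y)) := funext (hmarg' i)
    rw [this]
    exact (StronglyMeasurable.integral_prod_right'
      (f := fun p : ℝ × ({j : Fin n // j ≠ i} → ℝ) => f ((EE i).symm p))
      ((hf_meas.comp (EE i).symm.measurable).stronglyMeasurable)).measurable
  have hfi_int : ∀ i, Integrable (fi i) := by
    intro i
    have : fi i = fun x => ∫ y, f ((EE i).symm (x, y)) := funext (hmarg' i)
    rw [this]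
    exact (hG_int i).integral_prod_left
  have hfi_one : ∀ i, ∫ t, fi i t = 1 := by
    intro i
    have h1 : ∫ t, fi i t = ∫ t, ∫ y, f ((EE i).symm (t, y)) :=
      integral_congr_ae (Filter.Eventually.of_forall fun t => hmarg' i t)
    rw [h1, integral_integral (hG_int i)]
    simp only [Prod.mk.eta]
    rw [← Measure.volume_eq_prod, ((mpEE i).symm (EE i)).integral_comp' f, hf_one]
  -- the i-th log-marginal term
  set T : Fin n → (Fin n → ℝ) → ℝ := fun i x => f x * Real.log (fi i (x i)) with hTdef
  have hT_meas : ∀ i, Measurable (T i) := fun i =>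
    hf_meas.mul ((Real.measurable_log.comp (hfi_meas i)).comp (measurable_pi_apply i))
  -- integrability of T i
  have hT_int : ∀ i, Integrable (T i) := by
    intro i
    refine ⟨(hT_meas i).aestronglyMeasurable, ?_⟩
    rw [hasFiniteIntegral_iff_norm]
    have hcomp : ∫⁻ x, ENNReal.ofReal ‖T i x‖ ∂volume
        = ∫⁻ p : ℝ × ({j : Fin n // j ≠ i} → ℝ),
            ENNReal.ofReal ‖T i ((EE i).symm p)‖ ∂(volume.prod volume) :=
      (((mpEE i).symm (EE i)).lintegral_comp_emb
        (MeasurableEquiv.measurableEmbedding _) _).symm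
    rw [hcomp]
    have hTsymm : ∀ p : ℝ × ({j : Fin n // j ≠ i} → ℝ),
        ENNReal.ofReal ‖T i ((EE i).symm p)‖
          = ENNReal.ofReal |Real.log (fi i p.1)| * ENNReal.ofReal (f ((EE i).symm p)) := by
      intro p
      rw [hTdef]
      simp only [Real.norm_eq_abs, abs_mul, abs_of_nonneg (hf_nonneg _),
        EE_symm_apply_self i p]
      rw [mul_comm, ENNReal.ofReal_mul (abs_nonneg _)]
    simp_rw [hTsymm]
    have hmeasG : Measurable fun p : ℝ × ({j : Fin n // j ≠ i} → ℝ) =>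
        ENNReal.ofReal (f ((EE i).symm p)) :=
      ENNReal.measurable_ofReal.comp (hf_meas.comp (EE i).symm.measurable)
    have hm2 : Measurable (fun p : ℝ × ({j : Fin n // j ≠ i} → ℝ) =>
        ENNReal.ofReal |Real.log (fi i p.1)| * ENNReal.ofReal (f ((EE i).symm p))) := by
      refine Measurable.mul ?_ hmeasG
      exact ENNReal.measurable_ofReal.comp
        (((Real.measurable_log.comp (hfi_meas i)).comp measurable_fst).abs)
    rw [lintegral_prod _ hm2.aemeasurable]
    have hae : ∀ᵐ t : ℝ, ∫⁻ y, ENNReal.ofReal |Real.log (fi i t)|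
          * ENNReal.ofReal (f ((EE i).symm (t, y))) ∂volume
        = ENNReal.ofReal (fi i t * |Real.log (fi i t)|) := by
      filter_upwards [(hG_int i).prod_right_ae] with t ht
      rw [lintegral_const_mul _ (show Measurable fun y : {j : Fin n // j ≠ i} → ℝ =>
        ENNReal.ofReal (f ((EE i).symm (t, y))) from hmeasG.comp measurable_prodMk_left)]
      rw [← ofReal_integral_eq_lintegral_ofReal ht
        (Filter.Eventually.of_forall fun y => hf_nonneg _)]
      rw [← hmarg' i t, ← ENNReal.ofReal_mul (abs_nonneg _), mul_comm]
    rw [lintegral_congr_ae hae]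
    have hfin := (hHi_int i).2
    rw [hasFiniteIntegral_iff_norm] at hfin
    have : ∀ t : ℝ, ENNReal.ofReal (fi i t * |Real.log (fi i t)|)
        = ENNReal.ofReal ‖fi i t * Real.log (fi i t)‖ := by
      intro t
      rw [Real.norm_eq_abs, abs_mul, abs_of_nonneg (hfi_nonneg i t)]
    simp_rw [this]
    exact hfin
  -- value of ∫ T i
  have hT_val : ∀ i, ∫ x, T i x = ∫ t, fi i t * Real.log (fi i t) := by
    intro i
    have h1 : ∫ x, T i x = ∫ p : ℝ × ({j : Fin n // j ≠ i} → ℝ),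
        T i ((EE i).symm p) ∂(volume.prod volume) :=
      (((mpEE i).symm (EE i)).integral_comp' (T i)).symm
    have hTsymm : ∀ p : ℝ × ({j : Fin n // j ≠ i} → ℝ),
        T i ((EE i).symm p) = f ((EE i).symm p) * Real.log (fi i p.1) := by
      intro p
      rw [hTdef]
      simp only [EE_symm_apply_self i p]
    have hint2 : Integrable (fun p : ℝ × ({j : Fin n // j ≠ i} → ℝ) =>
        T i ((EE i).symm p)) (volume.prod volume) :=
      (((mpEE i).symm (EE i)).integrable_comp_emb
        (MeasurableEquiv.measurableEmbedding _)).mpr (hT_int i)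
    rw [h1, integral_congr_ae (Filter.Eventually.of_forall hTsymm)]
    rw [integral_prod _ (by
      refine hint2.congr (Filter.Eventually.of_forall fun p => hTsymm p) )]
    have : ∀ t : ℝ, ∫ y, f ((EE i).symm (t, y)) * Real.log (fi i t)
        = fi i t * Real.log (fi i t) := by
      intro t
      rw [integral_mul_const, ← hmarg' i t]
    exact integral_congr_ae (Filter.Eventually.of_forall this)
  -- pointwise decomposition
  set Tc : (Fin n → ℝ) → ℝ := fun x => f x * Real.log (c (Φ x)) with hTcdef
  have hpt : ∀ x, f x * Real.log (f x) = (∑ i, T i x) + Tc x := by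
    intro x
    by_cases hfx : f x = 0
    · simp [hTdef, hTcdef, hfx]
    · have hfpos : 0 < f x := lt_of_le_of_ne (hf_nonneg x) (Ne.symm hfx)
      have hSx := hSklar x
      have hprod_nonneg : 0 ≤ ∏ i, fi i (x i) :=
        Finset.prod_nonneg fun i _ => hfi_nonneg i (x i)
      have hprod_pos : 0 < ∏ i, fi i (x i) := by
        rcases hprod_nonneg.lt_or_eq with h | h
        · exact h
        · exfalso; rw [← h, zero_mul] at hSx; exact hfx hSx
      have hcpos : 0 < c (Φ x) := by
        nlinarith [hSx, hprod_pos, hfpos]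
      have hfi_pos : ∀ i, 0 < fi i (x i) := by
        intro i
        rcases (hfi_nonneg i (x i)).lt_or_eq with h | h
        · exact h
        · exfalso
          exact hprod_pos.ne' (Finset.prod_eq_zero (Finset.mem_univ i) h.symm)
      have hlog : Real.log (f x) = (∑ i, Real.log (fi i (x i))) + Real.log (c (Φ x)) := by
        rw [hSx, Real.log_mul hprod_pos.ne' hcpos.ne',
          Real.log_prod fun i _ => (hfi_pos i).ne']
      rw [hlog, mul_add, Finset.mul_sum]
  have hSum_int : Integrable (fun x => ∑ i, T i x) :=
    integrable_finset_sum _ fun i _ => hT_int i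
  have hTc_int : Integrable Tc := by
    have : Tc = fun x => f x * Real.log (f x) - ∑ i, T i x := by
      funext x
      rw [hpt x]; ring
    rw [this]
    exact hH_int.sub hSum_int
  have hsplit : ∫ x, f x * Real.log (f x)
      = (∑ i, ∫ x, T i x) + ∫ x, Tc x := by
    rw [integral_congr_ae (Filter.Eventually.of_forall hpt),
      integral_add hSum_int hTc_int, integral_finset_sum _ fun i _ => hT_int i]
  -- the copula term
  set ν : Fin n → Measure ℝ :=
    fun i => volume.withDensity (fun t => ENNReal.ofReal (fi i t)) with hνdef
  have hν_univ : ∀ i, ν i univ = 1 := by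
    intro i
    rw [hνdef]
    simp only [withDensity_apply _ MeasurableSet.univ, Measure.restrict_univ]
    rw [← ofReal_integral_eq_lintegral_ofReal (hfi_int i)
      (Filter.Eventually.of_forall fun t => hfi_nonneg i t), hfi_one i]
    simp
  haveI hν_fin : ∀ i, IsFiniteMeasure (ν i) := fun i =>
    ⟨by rw [hν_univ i]; exact ENNReal.one_lt_top⟩
  haveI hν_sf : ∀ i, SigmaFinite (ν i) := fun i => inferInstance
  have hmap : ∀ i, (ν i).map (Fi i) = volume.restrict (Ioc (0:ℝ) 1) := fun i =>
    map_cdf_eq (fi i) (hfi_nonneg i) (hfi_int i) (hfi_one i) (Fi i) (hFi i)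
      (hFi_mono i) (hFi_cont i)
  haveI hν_map_sf : ∀ i, SigmaFinite ((ν i).map (Fi i)) := fun i => by
    rw [hmap i]; infer_instance
  -- the density measure on the product space
  have hpiν : Measure.pi ν
      = (volume : Measure (Fin n → ℝ)).withDensity
          (fun x => ENNReal.ofReal (∏ i, fi i (x i))) := by
    rw [hνdef, pi_withDensity' (fun _ => volume)
      (fun i t => ENNReal.ofReal (fi i t))
      (fun i => ENNReal.measurable_ofReal.comp (hfi_meas i)), ← volume_pi]
    congr 1
    funext x
    rw [ENNReal.ofReal_prod_of_nonneg fun i _ => hfi_nonneg i (x i)]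
  have hmapΦ : (Measure.pi ν).map Φ
      = (volume : Measure (Fin n → ℝ)).restrict (univ.pi fun _ => Ioc (0:ℝ) 1) := by
    rw [hΦdef, pi_map' ν Fi fun i => (hFi_cont i).measurable]
    rw [show (fun i => (ν i).map (Fi i)) = fun _ => volume.restrict (Ioc (0:ℝ) 1) from
      funext fun i => hmap i]
    exact pi_restrict' _ fun _ => measurableSet_Ioc
  -- compute ∫ Tc
  have hTc_val : ∫ x, Tc x = ∫ u in (univ.pi fun _ => Icc (0:ℝ) 1),
      c u * Real.log (c u) := by
    have hD_meas : Measurable fun x : Fin n → ℝ => (∏ i, fi i (x i)).toNNReal :=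
      (Finset.measurable_prod _ fun i _ =>
        (hfi_meas i).comp (measurable_pi_apply i)).real_toNNReal
    have step1 : ∫ x, Tc x
        = ∫ x, (fun u => c u * Real.log (c u)) (Φ x)
            ∂((volume : Measure (Fin n → ℝ)).withDensity
              (fun x => ENNReal.ofReal (∏ i, fi i (x i)))) := by
      rw [show (fun x : Fin n → ℝ => ENNReal.ofReal (∏ i, fi i (x i)))
          = fun x => (((∏ i, fi i (x i)).toNNReal : ℝ≥0) : ENNReal) from rfl]
      rw [integral_withDensity_eq_integral_smul hD_meas]
      refine integral_congr_ae (Filter.Eventually.of_forall fun x => ?_)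
      have hco : ((∏ i, fi i (x i)).toNNReal : ℝ) = ∏ i, fi i (x i) :=
        Real.coe_toNNReal _ (Finset.prod_nonneg fun i _ => hfi_nonneg i (x i))
      simp only [hTcdef, NNReal.smul_def, smul_eq_mul, hco]
      simp only [hSklar x]
      ring
    have step2 : ∫ x, (fun u => c u * Real.log (c u)) (Φ x)
          ∂((volume : Measure (Fin n → ℝ)).withDensity
            (fun x => ENNReal.ofReal (∏ i, fi i (x i))))
        = ∫ u in (univ.pi fun _ => Ioc (0:ℝ) 1), c u * Real.log (c u) := by
      have hcm : AEStronglyMeasurable (fun u : Fin n → ℝ => c u * Real.log (c u))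
          ((Measure.pi ν).map Φ) := by
        refine Measurable.aestronglyMeasurable ?_
        exact hc_meas.mul (Real.measurable_log.comp hc_meas)
      rw [← hpiν, ← integral_map hΦ_meas.aemeasurable hcm, hmapΦ]
    have step3 : ∫ u in (univ.pi fun _ => Ioc (0:ℝ) 1), c u * Real.log (c u)
        = ∫ u in (univ.pi fun _ => Icc (0:ℝ) 1), c u * Real.log (c u) := by
      apply setIntegral_congr_set
      -- Ioc cube =ᵐ Icc cube
      rw [ae_eq_set]
      constructor
      · have : (univ.pi fun _ : Fin n => Ioc (0:ℝ) 1) \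
            (univ.pi fun _ : Fin n => Icc (0:ℝ) 1) = ∅ := by
          rw [diff_eq_empty]
          exact pi_mono fun i _ => Ioc_subset_Icc_self
        rw [this]; simp
      · refine measure_mono_null (fun x hx => ?_)
          (measure_iUnion_null fun i : Fin n => ?_ :
            volume (⋃ i : Fin n, {x : Fin n → ℝ | x i = 0}) = 0)
        · obtain ⟨hIcc, hIoc⟩ := hx
          rw [mem_univ_pi] at hIoc
          push_neg at hIoc
          obtain ⟨i, hi⟩ := hIoc
          have h1 := hIcc i (mem_univ i)
          simp only [mem_Icc] at h1
          simp only [mem_Ioc, not_and_or, not_lt, not_le] at hi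
          have : x i = 0 := by
            rcases hi with h | h
            · linarith [h1.1]
            · linarith [h1.2]
          exact mem_iUnion.mpr ⟨i, this⟩
        · have hset : {x : Fin n → ℝ | x i = 0}
              = univ.pi (fun j => if j = i then ({0} : Set ℝ) else univ) := by
            ext x
            simp only [mem_setOf_eq, mem_univ_pi]
            constructor
            · intro h j
              by_cases hj : j = i <;> simp [hj, h]
            · intro h
              have := h i
              simpa using this
          rw [hset, volume_pi, Measure.pi_pi]
          refine Finset.prod_eq_zero (Finset.mem_univ i) ?_
          simp
    rw [step1, step2, step3]
  -- conclude
  rw [hsplit, hTcdef] at *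
  have hsum : (∑ i, ∫ x, T i x) = ∑ i, ∫ t, fi i t * Real.log (fi i t) :=
    Finset.sum_congr rfl fun i _ => hT_val i
  rw [hsum, hTc_val, neg_add, ← Finset.sum_neg_distrib]
end

section
/- Sklar's theorem in the bivariate absolutely continuous case: if (X,Y) has joint density f and continuous strictly increasing marginals F_X, F_Y with densities f_X, f_Y, then there exists a copula density c on [0,1]^2 with uniform marginals such that f(x,y) = f_X(x) f_Y(y) c(F_X(x), F_Y(y)) for almost every (x,y). -/
open MeasureTheory Set Filter Function Topology
open scoped ENNReal


namespace SklarAux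

/-- Quantile-type inverse of `F`, truncated outside `(0,1)`. -/
noncomputable def Q (F : ℝ → ℝ) : ℝ → ℝ :=
  fun u => if u ∈ Ioo (0:ℝ) 1 then Function.invFun F u else 0

/-- `g` is a density with CDF `F`, strictly increasing with range inside `(0,1)`. -/
structure Marginal (g F : ℝ → ℝ) : Prop where
  meas : Measurable g
  nonneg : ∀ x, 0 ≤ g x
  int : Integrable g
  one : ∫ x, g x = 1
  cdf : ∀ x, F x = ∫ t in Iic x, g t
  mono : StrictMono F
  cont : Continuous F
  mem_range : ∀ x, F x ∈ Ioo (0:ℝ) 1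

/-- The measure with density `g`. -/
noncomputable def dm (g : ℝ → ℝ) : Measure ℝ :=
  volume.withDensity fun x => ENNReal.ofReal (g x)

variable {g F : ℝ → ℝ}

theorem Marginal.dm_Iic (h : Marginal g F) (x : ℝ) :
    dm g (Iic x) = ENNReal.ofReal (F x) := by
  rw [dm, withDensity_apply _ measurableSet_Iic, h.cdf x,
    ofReal_integral_eq_lintegral_ofReal h.int.integrableOn
      (Eventually.of_forall fun t => h.nonneg t)]

theorem Marginal.dm_univ (h : Marginal g F) : dm g univ = 1 := by
  rw [dm, withDensity_apply _ MeasurableSet.univ, Measure.restrict_univ,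
    ← ofReal_integral_eq_lintegral_ofReal h.int (Eventually.of_forall fun t => h.nonneg t),
    h.one, ENNReal.ofReal_one]

instance (g : ℝ → ℝ) : SigmaFinite (dm g) := by
  unfold dm; infer_instance

theorem Marginal.isFiniteMeasure (h : Marginal g F) : IsFiniteMeasure (dm g) :=
  ⟨by rw [h.dm_univ]; exact ENNReal.one_lt_top⟩

theorem Marginal.tendsto_atTop (h : Marginal g F) : Tendsto F atTop (𝓝 1) := by
  have h1 : Tendsto (fun x => dm g (Iic x)) atTop (𝓝 (dm g univ)) :=
    tendsto_measure_Iic_atTop _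
  rw [h.dm_univ] at h1
  have h2 : Tendsto (fun x => (dm g (Iic x)).toReal) atTop (𝓝 (1 : ℝ≥0∞).toReal) :=
    (ENNReal.tendsto_toReal (by simp)).comp h1
  simp only [ENNReal.toReal_one] at h2
  refine h2.congr fun x => ?_
  rw [h.dm_Iic, ENNReal.toReal_ofReal]
  exact le_of_lt (h.mem_range x).1

theorem Marginal.tendsto_atBot (h : Marginal g F) : Tendsto F atBot (𝓝 0) := by
  have hempty : (⋂ x : ℝ, Iic x) = (∅ : Set ℝ) := by
    apply eq_empty_iff_forall_notMem.2
    intro x hx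
    have := mem_iInter.1 hx (x - 1)
    simp only [mem_Iic] at this
    linarith
  have h1 : Tendsto (dm g ∘ fun x : ℝ => Iic x) atBot (𝓝 (dm g (⋂ x : ℝ, Iic x))) :=
    tendsto_measure_iInter_atBot (fun i => measurableSet_Iic.nullMeasurableSet)
      (fun a b hab => Iic_subset_Iic.2 hab) ⟨0, by
        have := h.isFiniteMeasure
        exact measure_ne_top _ _⟩
  rw [hempty, measure_empty] at h1
  have h2 : Tendsto (fun x => (dm g (Iic x)).toReal) atBot (𝓝 (0 : ℝ≥0∞).toReal) :=
    (ENNReal.tendsto_toReal (by simp)).comp h1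
  simp only [ENNReal.toReal_zero] at h2
  refine h2.congr fun x => ?_
  rw [h.dm_Iic, ENNReal.toReal_ofReal]
  exact le_of_lt (h.mem_range x).1

theorem Marginal.surj (h : Marginal g F) {u : ℝ} (hu : u ∈ Ioo (0:ℝ) 1) :
    ∃ x, F x = u := by
  obtain ⟨a, ha⟩ : ∃ a, F a < u := (h.tendsto_atBot.eventually_lt_const hu.1).exists
  obtain ⟨b, hb⟩ : ∃ b, u < F b := (h.tendsto_atTop.eventually_const_lt hu.2).exists
  have hab : a ≤ b := le_of_lt (h.mono.lt_iff_lt.1 (ha.trans hb))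
  obtain ⟨x, -, hx⟩ := intermediate_value_Icc hab h.cont.continuousOn
    (mem_Icc.2 ⟨ha.le, hb.le⟩)
  exact ⟨x, hx⟩

theorem Marginal.range_eq (h : Marginal g F) : Set.range F = Ioo (0:ℝ) 1 := by
  apply subset_antisymm
  · rintro u ⟨x, rfl⟩; exact h.mem_range x
  · intro u hu; exact h.surj hu

theorem Marginal.push (h : Marginal g F) :
    (dm g).map F = volume.restrict (Ioo (0:ℝ) 1) := by
  have := h.isFiniteMeasure
  have hFm : Measurable F := h.cont.measurable
  have : IsFiniteMeasure ((dm g).map F) :=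
    ⟨by rw [Measure.map_apply hFm MeasurableSet.univ, preimage_univ, h.dm_univ]; simp⟩
  refine Measure.ext_of_Iic _ _ fun a => ?_
  rw [Measure.map_apply hFm measurableSet_Iic,
    Measure.restrict_apply measurableSet_Iic]
  rcases le_or_gt a 0 with h0 | h0
  · have h1 : F ⁻¹' Iic a = ∅ := by
      apply eq_empty_iff_forall_notMem.2
      intro x hx
      exact absurd (lt_of_le_of_lt (le_trans (mem_Iic.1 hx) h0) (h.mem_range x).1)
        (lt_irrefl _)
    have h2 : Iic a ∩ Ioo (0:ℝ) 1 = ∅ := by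
      apply eq_empty_iff_forall_notMem.2
      rintro x ⟨hx1, hx2, -⟩
      exact absurd (lt_of_le_of_lt (le_trans hx1 h0) hx2) (lt_irrefl _)
    rw [h1, h2, measure_empty, measure_empty]
  rcases lt_or_ge a 1 with h1 | h1
  · obtain ⟨x₀, rfl⟩ := h.surj ⟨h0, h1⟩
    have hpre : F ⁻¹' Iic (F x₀) = Iic x₀ := by
      ext x; simp [h.mono.le_iff_le]
    have hint : Iic (F x₀) ∩ Ioo (0:ℝ) 1 = Ioc 0 (F x₀) := by
      ext u
      simp only [mem_inter_iff, mem_Iic, mem_Ioo, mem_Ioc]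
      constructor
      · rintro ⟨h1, h2, h3⟩; exact ⟨h2, h1⟩
      · rintro ⟨h2, h1⟩; exact ⟨h1, h2, lt_of_le_of_lt h1 (h.mem_range x₀).2⟩
    rw [hpre, hint, h.dm_Iic, Real.volume_Ioc, sub_zero]
  · have hpre : F ⁻¹' Iic a = univ := by
      apply eq_univ_iff_forall.2
      intro x
      exact mem_Iic.2 (le_trans (le_of_lt (h.mem_range x).2) h1)
    have hint : Iic a ∩ Ioo (0:ℝ) 1 = Ioo 0 1 := by
      refine inter_eq_self_of_subset_right ?_
      intro u hu
      exact mem_Iic.2 (le_trans (le_of_lt hu.2) h1)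
    rw [hpre, hint, h.dm_univ, Real.volume_Ioo, sub_zero, ENNReal.ofReal_one]

theorem Marginal.emb (h : Marginal g F) : MeasurableEmbedding F :=
  h.cont.measurableEmbedding h.mono.injective

theorem Marginal.image_null (h : Marginal g F) {N : Set ℝ} (hN : volume N = 0) :
    volume (F '' N) = 0 := by
  have hsub : F '' N ⊆ Ioo (0:ℝ) 1 := by
    rintro u ⟨x, -, rfl⟩; exact h.mem_range x
  have h1 : volume (F '' N) = volume.restrict (Ioo (0:ℝ) 1) (F '' N) := by
    rw [Measure.restrict_apply' measurableSet_Ioo, inter_eq_self_of_subset_left hsub]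
  rw [h1, ← h.push, h.emb.map_apply, preimage_image_eq _ h.mono.injective]
  exact (withDensity_absolutelyContinuous _ _) hN

theorem Marginal.QF (h : Marginal g F) (x : ℝ) : Q F (F x) = x := by
  rw [Q, if_pos (h.mem_range x), Function.leftInverse_invFun h.mono.injective x]

theorem Marginal.FQ (h : Marginal g F) {u : ℝ} (hu : u ∈ Ioo (0:ℝ) 1) :
    F (Q F u) = u := by
  rw [Q, if_pos hu]
  exact Function.invFun_eq (h.surj hu)

theorem Marginal.Q_meas (h : Marginal g F) : Measurable (Q F) := by
  intro A hA
  have himg : ∀ u, u ∈ Ioo (0:ℝ) 1 → (Q F u ∈ A ↔ u ∈ F '' A) := by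
    intro u hu
    constructor
    · intro hQ; exact ⟨Q F u, hQ, h.FQ hu⟩
    · rintro ⟨x, hx, rfl⟩; rwa [h.QF]
  by_cases h0 : (0:ℝ) ∈ A
  · have : Q F ⁻¹' A = F '' A ∪ (Ioo (0:ℝ) 1)ᶜ := by
      ext u
      simp only [mem_preimage, mem_union, mem_compl_iff]
      by_cases hu : u ∈ Ioo (0:ℝ) 1
      · simp only [hu, not_true_eq_false, or_false]
        exact himg u hu
      · simp only [hu, not_false_eq_true, or_true, iff_true]
        rw [Q, if_neg hu]; exact h0
    rw [this]
    exact (h.emb.measurableSet_image' hA).union measurableSet_Ioo.compl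
  · have : Q F ⁻¹' A = F '' A := by
      ext u
      simp only [mem_preimage]
      by_cases hu : u ∈ Ioo (0:ℝ) 1
      · exact himg u hu
      · rw [Q, if_neg hu]
        simp only [h0, false_iff]
        rintro ⟨x, -, rfl⟩
        exact hu (h.mem_range x)
    rw [this]
    exact h.emb.measurableSet_image' hA

theorem Marginal.change (h : Marginal g F) {φ : ℝ → ℝ≥0∞} (hφ : Measurable φ) :
    ∫⁻ u in Ioo (0:ℝ) 1, φ u = ∫⁻ x, ENNReal.ofReal (g x) * φ (F x) := by
  rw [← h.push, lintegral_map hφ h.cont.measurable, dm,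
    lintegral_withDensity_eq_lintegral_mul volume (h.meas.ennreal_ofReal)
      (g := fun x => φ (F x)) (hφ.comp h.cont.measurable)]
  rfl

/-- The copula density built from the joint density and the quantile functions. -/
noncomputable def cop (f : ℝ × ℝ → ℝ) (gX gY FX FY : ℝ → ℝ) : ℝ × ℝ → ℝ :=
  fun p => f (Q FX p.1, Q FY p.2) / (gX (Q FX p.1) * gY (Q FY p.2))

variable {f : ℝ × ℝ → ℝ} {gX gY FX FY : ℝ → ℝ}

theorem cop_meas (hf : Measurable f) (hX : Marginal gX FX) (hY : Marginal gY FY) :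
    Measurable (cop f gX gY FX FY) := by
  have h1 : Measurable fun p : ℝ × ℝ => Q FX p.1 := hX.Q_meas.comp measurable_fst
  have h2 : Measurable fun p : ℝ × ℝ => Q FY p.2 := hY.Q_meas.comp measurable_snd
  exact (hf.comp (h1.prodMk h2)).div ((hX.meas.comp h1).mul (hY.meas.comp h2))

theorem cop_nonneg (hf : ∀ p, 0 ≤ f p) (hX : Marginal gX FX) (hY : Marginal gY FY) :
    ∀ p, 0 ≤ cop f gX gY FX FY p := fun p =>
  div_nonneg (hf _) (mul_nonneg (hX.nonneg _) (hY.nonneg _))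

theorem lmarginal (hf_meas : Measurable f) (hf_nonneg : ∀ p, 0 ≤ f p)
    (hX : Marginal gX FX) (hY : Marginal gY FY)
    (hmargX : ∀ x, gX x = ∫ y, f (x, y))
    (haeint : ∀ᵐ x : ℝ, Integrable fun y => f (x, y))
    (hgX_pos : ∀ᵐ x : ℝ, 0 < gX x) (hgY_pos : ∀ᵐ y : ℝ, 0 < gY y) :
    ∀ᵐ u ∂(volume.restrict (Icc (0:ℝ) 1)),
      ∫⁻ v in Icc (0:ℝ) 1, ENNReal.ofReal (cop f gX gY FX FY (u, v)) = 1 := by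
  set N : Set ℝ := {x | ¬ (0 < gX x ∧ Integrable fun y => f (x, y))} with hNdef
  have hN : volume N = 0 := by
    have := hgX_pos.and haeint
    rwa [ae_iff] at this
  have h1 : ∀ᵐ u ∂(volume.restrict (Icc (0:ℝ) 1)), u ∉ FX '' N :=
    ae_restrict_of_ae (by rw [ae_iff]; simpa only [not_not, setOf_mem_eq] using hX.image_null hN)
  have h2 : ∀ᵐ u ∂(volume.restrict (Icc (0:ℝ) 1)), u ∈ Ioo (0:ℝ) 1 := by
    rw [← Measure.restrict_congr_set Ioo_ae_eq_Icc]
    exact ae_restrict_mem measurableSet_Ioo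
  filter_upwards [h1, h2] with u hu1 hu2
  set x := Q FX u with hx
  have hFx : FX x = u := hX.FQ hu2
  have hxN : x ∉ N := fun hmem => hu1 ⟨x, hmem, hFx⟩
  rw [hNdef, mem_setOf_eq, not_not] at hxN
  obtain ⟨hgx, hint⟩ := hxN
  have hcm : Measurable fun v => ENNReal.ofReal (cop f gX gY FX FY (u, v)) :=
    ((cop_meas hf_meas hX hY).comp measurable_prodMk_left).ennreal_ofReal
  rw [← Measure.restrict_congr_set Ioo_ae_eq_Icc, hY.change hcm]
  have heq : ∀ᵐ y : ℝ, ENNReal.ofReal (gY y) *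
      ENNReal.ofReal (cop f gX gY FX FY (u, FY y)) = ENNReal.ofReal (f (x, y) / gX x) := by
    filter_upwards [hgY_pos] with y hy
    have h3 : cop f gX gY FX FY (u, FY y) = f (x, y) / (gX x * gY y) := by
      simp only [cop]
      rw [hY.QF, ← hx]
    rw [h3, ← ENNReal.ofReal_mul (hY.nonneg y)]
    congr 1
    field_simp
  rw [lintegral_congr_ae heq,
    ← ofReal_integral_eq_lintegral_ofReal (hint.div_const _)
      (Eventually.of_forall fun y => div_nonneg (hf_nonneg _) hgx.le),
    integral_div, ← hmargX x, div_self (ne_of_gt hgx), ENNReal.ofReal_one]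

end SklarAux


/-- Sklar's theorem (bivariate, absolutely continuous case): there exists a copula
density `c` on `[0,1]²` with uniform marginals such that
`f(x,y) = f_X(x) f_Y(y) c(F_X(x), F_Y(y))` almost everywhere. -/
theorem sklar_bivariate_density
    (f : ℝ × ℝ → ℝ) (fX fY FX FY : ℝ → ℝ)
    (hf_meas : Measurable f) (hf_nonneg : ∀ p, 0 ≤ f p)
    (hf_int : Integrable f) (hf_one : ∫ p, f p = 1)
    (hmargX : ∀ x, fX x = ∫ y, f (x, y))
    (hmargY : ∀ y, fY y = ∫ x, f (x, y))
    (hfX_pos : ∀ᵐ x : ℝ, 0 < fX x) (hfY_pos : ∀ᵐ y : ℝ, 0 < fY y)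
    (hFX : ∀ x, FX x = ∫ t in Iic x, fX t)
    (hFY : ∀ y, FY y = ∫ t in Iic y, fY t)
    (hFX_mono : StrictMono FX) (hFY_mono : StrictMono FY)
    (hFX_cont : Continuous FX) (hFY_cont : Continuous FY)
    (hFX_range : ∀ x, FX x ∈ Ioo (0:ℝ) 1) (hFY_range : ∀ y, FY y ∈ Ioo (0:ℝ) 1) :
    ∃ c : ℝ × ℝ → ℝ, Measurable c ∧ (∀ p, 0 ≤ c p) ∧
      IntegrableOn c (Icc (0:ℝ) 1 ×ˢ Icc (0:ℝ) 1) ∧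
      (∀ᵐ u ∂(volume.restrict (Icc (0:ℝ) 1)), (∫ v in Icc (0:ℝ) 1, c (u, v)) = 1) ∧
      (∀ᵐ v ∂(volume.restrict (Icc (0:ℝ) 1)), (∫ u in Icc (0:ℝ) 1, c (u, v)) = 1) ∧
      (∀ᵐ p : ℝ × ℝ, f p = fX p.1 * fY p.2 * c (FX p.1, FY p.2)) := by
  have hvol : (volume : Measure (ℝ × ℝ)) = (volume : Measure ℝ).prod volume :=
    Measure.volume_eq_prod ℝ ℝ
  have hf_int' : Integrable f ((volume : Measure ℝ).prod volume) := by rwa [← hvol]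
  have hfX_meas : Measurable fX := by
    rw [funext hmargX]
    exact hf_meas.stronglyMeasurable.integral_prod_right'.measurable
  have hfY_meas : Measurable fY := by
    rw [funext hmargY]
    exact hf_meas.stronglyMeasurable.integral_prod_left'.measurable
  have hfX_nonneg : ∀ x, 0 ≤ fX x := fun x =>
    (hmargX x) ▸ integral_nonneg fun y => hf_nonneg _
  have hfY_nonneg : ∀ y, 0 ≤ fY y := fun y =>
    (hmargY y) ▸ integral_nonneg fun x => hf_nonneg _
  have hfX_int : Integrable fX := by
    rw [funext hmargX]; exact hf_int'.integral_prod_left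
  have hfY_int : Integrable fY := by
    rw [funext hmargY]; exact hf_int'.integral_prod_right
  have hfX_one : ∫ x, fX x = 1 := by
    simp only [hmargX]
    rw [MeasureTheory.integral_integral (f := fun x y => f (x, y)) hf_int', ← hvol]
    simpa using hf_one
  have hfY_one : ∫ y, fY y = 1 := by
    simp only [hmargY]
    rw [← MeasureTheory.integral_integral_swap (f := fun x y => f (x, y)) hf_int',
      MeasureTheory.integral_integral (f := fun x y => f (x, y)) hf_int', ← hvol]
    simpa using hf_one
  have hX : SklarAux.Marginal fX FX :=
    ⟨hfX_meas, hfX_nonneg, hfX_int, hfX_one, hFX, hFX_mono, hFX_cont, hFX_range⟩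
  have hY : SklarAux.Marginal fY FY :=
    ⟨hfY_meas, hfY_nonneg, hfY_int, hfY_one, hFY, hFY_mono, hFY_cont, hFY_range⟩
  have hfs_meas : Measurable fun p : ℝ × ℝ => f (p.2, p.1) := hf_meas.comp measurable_swap
  have hfs_int' : Integrable (fun p : ℝ × ℝ => f (p.2, p.1))
      ((volume : Measure ℝ).prod volume) := hf_int'.swap
  have haeintX : ∀ᵐ x : ℝ, Integrable fun y => f (x, y) := hf_int'.prod_right_ae
  have haeintY : ∀ᵐ y : ℝ, Integrable fun x => f (x, y) := hf_int'.prod_left_ae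
  set c := SklarAux.cop f fX fY FX FY with hc
  have hc_meas : Measurable c := SklarAux.cop_meas hf_meas hX hY
  have hc_nonneg : ∀ p, 0 ≤ c p := SklarAux.cop_nonneg hf_nonneg hX hY
  have keyU : ∀ᵐ u ∂(volume.restrict (Icc (0:ℝ) 1)),
      ∫⁻ v in Icc (0:ℝ) 1, ENNReal.ofReal (c (u, v)) = 1 :=
    SklarAux.lmarginal hf_meas hf_nonneg hX hY hmargX haeintX hfX_pos hfY_pos
  have keyV' : ∀ᵐ v ∂(volume.restrict (Icc (0:ℝ) 1)),
      ∫⁻ u in Icc (0:ℝ) 1,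
        ENNReal.ofReal (SklarAux.cop (fun p : ℝ × ℝ => f (p.2, p.1)) fY fX FY FX (v, u)) = 1 :=
    SklarAux.lmarginal hfs_meas (fun p => hf_nonneg _) hY hX (fun y => hmargY y)
      haeintY hfY_pos hfX_pos
  have hswap : ∀ v u : ℝ,
      SklarAux.cop (fun p : ℝ × ℝ => f (p.2, p.1)) fY fX FY FX (v, u) = c (u, v) := by
    intro v u
    simp only [hc, SklarAux.cop]
    rw [mul_comm]
  have keyV : ∀ᵐ v ∂(volume.restrict (Icc (0:ℝ) 1)),
      ∫⁻ u in Icc (0:ℝ) 1, ENNReal.ofReal (c (u, v)) = 1 := by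
    simpa only [hswap] using keyV'
  refine ⟨c, hc_meas, hc_nonneg, ⟨hc_meas.aestronglyMeasurable.restrict, ?_⟩, ?_, ?_, ?_⟩
  · rw [hasFiniteIntegral_iff_ofReal (Eventually.of_forall fun p => hc_nonneg p)]
    have hr : (volume : Measure (ℝ × ℝ)).restrict (Icc (0:ℝ) 1 ×ˢ Icc (0:ℝ) 1) =
        (volume.restrict (Icc (0:ℝ) 1)).prod (volume.restrict (Icc (0:ℝ) 1)) := by
      rw [hvol, Measure.prod_restrict]
    rw [hr, lintegral_prod _ hc_meas.ennreal_ofReal.aemeasurable]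
    have : ∫⁻ u in Icc (0:ℝ) 1, ∫⁻ v in Icc (0:ℝ) 1, ENNReal.ofReal (c (u, v)) = 1 := by
      rw [lintegral_congr_ae keyU]
      simp [Real.volume_Icc]
    rw [this]
    exact ENNReal.one_lt_top
  · filter_upwards [keyU] with u hu
    rw [integral_eq_lintegral_of_nonneg_ae (Eventually.of_forall fun v => hc_nonneg (u, v))
      (hc_meas.comp measurable_prodMk_left).aestronglyMeasurable.restrict, hu]
    simp
  · filter_upwards [keyV] with v hv
    rw [integral_eq_lintegral_of_nonneg_ae (Eventually.of_forall fun u => hc_nonneg (u, v))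
      (hc_meas.comp measurable_prodMk_right).aestronglyMeasurable.restrict, hv]
    simp
  · have hX1 : ∀ᵐ p : ℝ × ℝ, 0 < fX p.1 := by
      rw [hvol]
      exact Measure.quasiMeasurePreserving_fst.ae hfX_pos
    have hY1 : ∀ᵐ p : ℝ × ℝ, 0 < fY p.2 := by
      rw [hvol]
      exact Measure.quasiMeasurePreserving_snd.ae hfY_pos
    filter_upwards [hX1, hY1] with p h1 h2
    have h3 : c (FX p.1, FY p.2) = f p / (fX p.1 * fY p.2) := by
      simp only [hc, SklarAux.cop]
      rw [hX.QF, hY.QF]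
    rw [h3]
    field_simp
end
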